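/- Let λ > 0, M > 0, p < 0 with λe^{pM} = λ + p, and k = −p/(M(λ+p)). Then ∫₀^M e^{λu} · (1/M)(1 − e^{pu}) du = k/λ. -/

import Mathlib

open Real MeasureTheory

lemma integral_exp_mul_real (a b c : ℝ) (hc : c ≠ 0) :
    (∫ x in a..b, Real.exp (c * x)) = (Real.exp (c * b) - Real.exp (c * a)) / c := by
  have D : ∀ x : ℝ, HasDerivAt (fun y : ℝ => Real.exp (c * y) / c) (Real.exp (c * x)) x := by
    intro x
    rw [← mul_div_cancel_right₀ (Real.exp (c * x)) hc]
    exact (((Real.hasDerivAt_exp _).comp x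
      (by simpa only [mul_one, id_eq] using (hasDerivAt_id x).const_mul c))).div_const c
  rw [intervalIntegral.integral_deriv_eq_sub' _ (funext fun x => (D x).deriv)
      (fun x _ => (D x).differentiableAt) (by fun_prop)]
  ring

/-- Consistency condition: `∫₀^M e^{λu} (1/M)(1 - e^{pu}) du = k/λ`
with `k = -p/(M(λ+p))` and `λ e^{pM} = λ + p`. -/
theorem stmt6 (lam M p : ℝ) (hlam : 0 < lam) (hM : 0 < M)
    (hp : p < 0) (heq : lam * Real.exp (p * M) = lam + p)
    (k : ℝ) (hk : k = -p / (M * (lam + p))) :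
    (∫ u in (0 : ℝ)..M, Real.exp (lam * u) * ((1 / M) * (1 - Real.exp (p * u))))
      = k / lam := by
  have hlp : 0 < lam + p := by
    rw [← heq]; positivity
  have h1 : (∫ u in (0 : ℝ)..M, Real.exp (lam * u) * ((1 / M) * (1 - Real.exp (p * u))))
      = (1 / M) * ((∫ u in (0 : ℝ)..M, Real.exp (lam * u))
        - ∫ u in (0 : ℝ)..M, Real.exp ((lam + p) * u)) := by
    rw [← intervalIntegral.integral_sub (by apply Continuous.intervalIntegrable; continuity)
      (by apply Continuous.intervalIntegrable; continuity),
      ← intervalIntegral.integral_const_mul]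
    congr 1; ext u
    rw [add_mul, Real.exp_add]
    ring
  rw [h1, integral_exp_mul_real _ _ _ hlam.ne', integral_exp_mul_real _ _ _ hlp.ne']
  have hepM : Real.exp ((lam + p) * M) = Real.exp (lam * M) * ((lam + p) / lam) := by
    rw [add_mul, Real.exp_add, ← heq]
    field_simp
  rw [hepM, hk]
  field_simp
  simp only [mul_zero, zero_mul, Real.exp_zero]
  ring
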